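/- Let p ≥ 2, α ≥ 0 and let n > 1 - α + α/p; set N := p(n+α)/(p+α) (so N > 1). Let ω : (0,∞) → ℝ be differentiable with continuous derivative ω' that never vanishes on (0,∞), and suppose 0 < ∫₀¹ t^{N-3}|ω'(t)|^p dt < ∞. Assume the radial stability inequality: (N-1)·∫₀^∞ t^{N-3}|ω'(t)|² · η(t)² · |ω'(t)|^{p-2} dt ≤ (p-1)·∫₀^∞ t^{N-1}|ω'(t)|^p · η'(t)² dt holds for every locally Lipschitz function η : [0,∞) → ℝ with compact support, where η' denotes its almost-everywhere derivative (the left side equals (N-1)∫₀^∞ t^{N-3}|ω'(t)|^p η(t)² dt). Then, with C := (p-1)/((N-1)·∫₀¹ t^{N-3}|ω'(t)|^p dt), for all real s, S with 1 ≤ s ≤ S one has ∫_s^S t^{-(N-1)} |ω'(t)|^{-p} dt ≤ C · s^{-2·√((N-1)/(p-1))}. -/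

import Mathlib

open Real MeasureTheory Set

set_option maxHeartbeats 2000000 in
private lemma stability_aux (p N : ℝ) (hp : 2 ≤ p) (hN1 : 1 < N)
    (g : ℝ → ℝ) (hgc : ContinuousOn g (Ioi 0)) (hgpos : ∀ t ∈ Ioi (0:ℝ), 0 < g t)
    (hInt : IntegrableOn (fun t => t ^ (N - 3) * g t) (Ioo 0 1))
    (hIntpos : 0 < ∫ t in Ioo (0:ℝ) 1, t ^ (N - 3) * g t)
    (hstab : ∀ η : ℝ → ℝ, LocallyLipschitz η → HasCompactSupport η →
      (N - 1) * ∫ t in Ioi (0:ℝ), t ^ (N - 3) * g t * η t ^ 2 ≤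
        (p - 1) * ∫ t in Ioi (0:ℝ), t ^ (N - 1) * g t * deriv η t ^ 2) :
    ∀ s S : ℝ, 1 ≤ s → s ≤ S →
      (∫ t in Ioc s S, t ^ (-(N - 1)) * (g t)⁻¹) ≤
        (p - 1) / ((N - 1) * ∫ t in Ioo (0:ℝ) 1, t ^ (N - 3) * g t) *
          s ^ (-2 * Real.sqrt ((N - 1) / (p - 1))) := by
  intro s S hs hsS
  have hp1 : (1:ℝ) < p := by linarith
  have hN1' : 0 < N - 1 := by linarith
  have hs0 : (0:ℝ) < s := by linarith
  have hS0 : (0:ℝ) < S := by linarith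
  set γ : ℝ := Real.sqrt ((N - 1) / (p - 1)) with hγdef
  have hpne : p - 1 ≠ 0 := by linarith
  have hγpos : 0 < γ := Real.sqrt_pos.2 (div_pos (by linarith) (by linarith))
  have hγsq : (p - 1) * γ ^ 2 = N - 1 := by
    rw [hγdef, Real.sq_sqrt (le_of_lt (div_pos (by linarith) (by linarith)))]
    field_simp
  set A := ∫ t in Ioo (0:ℝ) 1, t ^ (N - 3) * g t with hA
  rcases eq_or_lt_of_le hsS with rfl | hlt
  · rw [Set.Ioc_self, MeasureTheory.setIntegral_empty]
    have h1 : 0 ≤ (p - 1) / ((N - 1) * A) :=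
      div_nonneg (by linarith) (mul_nonneg (by linarith) hIntpos.le)
    have h2 : 0 ≤ s ^ (-2 * γ) := Real.rpow_nonneg hs0.le _
    exact mul_nonneg h1 h2
  -- now 1 ≤ s < S
  set f : ℝ → ℝ := fun t => t ^ (-(N - 1)) * (g t)⁻¹ with hfdef
  have hfc : ContinuousOn f (Ioi 0) := by
    apply ContinuousOn.mul
    · exact ContinuousOn.rpow_const continuousOn_id (fun t ht => Or.inl (ne_of_gt ht))
    · exact hgc.inv₀ (fun t ht => (hgpos t ht).ne')
  have hfpos : ∀ t ∈ Ioi (0:ℝ), 0 < f t := fun t ht =>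
    mul_pos (Real.rpow_pos_of_pos ht _) (inv_pos.2 (hgpos t ht))
  have hfci : ∀ a b : ℝ, 0 < a → 0 < b → IntervalIntegrable f volume a b := by
    intro a b ha hb
    refine (hfc.mono ?_).intervalIntegrable
    intro x hx
    exact lt_of_lt_of_le (lt_min ha hb) hx.1
  set h : ℝ → ℝ := fun t => ∫ x in t..S, f x with hhdef
  set J : ℝ := ∫ t in Ioc s S, f t with hJdef
  have hJs : h s = J := intervalIntegral.integral_of_le hsS
  have hJpos : 0 < J := by
    rw [← hJs]
    exact intervalIntegral.intervalIntegral_pos_of_pos_on (hfci s S hs0 hS0)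
      (fun x hx => hfpos x (lt_trans hs0 hx.1)) hlt
  have hhd : ∀ t ∈ Ioi (0:ℝ), HasDerivAt h (-(f t)) t := by
    intro t ht
    exact intervalIntegral.integral_hasDerivAt_left (hfci t S ht hS0)
      (hfc.stronglyMeasurableAtFilter isOpen_Ioi t ht)
      (hfc.continuousAt (Ioi_mem_nhds ht))
  have hhS : h S = 0 := intervalIntegral.integral_same
  set ht : ℝ → ℝ := fun t => h (max t s) with htdef
  have hth : ∀ t, s ≤ t → ht t = h t := fun t hts => by
    simp only [htdef, max_eq_left hts]
  have hhtc : Continuous ht := by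
    refine continuous_iff_continuousAt.2 fun t => ?_
    have hcomp : ContinuousAt (h ∘ fun u : ℝ => max u s) t :=
      ContinuousAt.comp ((hhd (max t s) (lt_of_lt_of_le hs0 (le_max_right _ _))).continuousAt)
        ((continuous_id.max continuous_const).continuousAt)
    exact hcomp
  set η : ℝ → ℝ := fun t => if t ≤ 0 then max (1 + t) 0 else if t ≤ 1 then 1
    else if t ≤ s then (max t 1) ^ (-γ) else if t ≤ S then s ^ (-γ) * ht t / J else 0
    with hηdef
  -- pointwise values
  have hη1 : ∀ t ∈ Icc (0:ℝ) 1, η t = 1 := by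
    intro t htm
    by_cases h0 : t ≤ 0
    · have : t = 0 := le_antisymm h0 htm.1
      simp [hηdef, this]
    · simp [hηdef, h0, htm.2]
  have hη2 : ∀ t ∈ Ioc (1:ℝ) s, η t = t ^ (-γ) := by
    intro t htm
    have h0 : ¬ t ≤ 0 := by push_neg; linarith [htm.1]
    have h1 : ¬ t ≤ 1 := not_le.2 htm.1
    simp [hηdef, h0, h1, htm.2, max_eq_left htm.1.le]
  have hη3 : ∀ t ∈ Icc s S, η t = s ^ (-γ) * h t / J := by
    intro t htm
    have ht0 : ¬ t ≤ 0 := by push_neg; linarith [htm.1]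
    by_cases h1 : t ≤ 1
    · have hts : t = 1 := le_antisymm h1 (le_trans hs htm.1)
      have hseq : s = 1 := le_antisymm (by linarith [htm.1]) hs
      rw [hη1 t ⟨by linarith, h1⟩, hts]
      rw [hseq] at hJs ⊢
      rw [one_rpow, one_mul, hJs, div_self hJpos.ne']
    · by_cases h2 : t ≤ s
      · have hts : t = s := le_antisymm h2 htm.1
        show (if t ≤ 0 then max (1 + t) 0 else if t ≤ 1 then 1
          else if t ≤ s then (max t 1) ^ (-γ) else if t ≤ S then s ^ (-γ) * ht t / J else 0)
          = s ^ (-γ) * h t / J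
        rw [if_neg ht0, if_neg h1, if_pos h2, hts, max_eq_left hs, hJs,
          mul_div_assoc, div_self hJpos.ne', mul_one]
      · show (if t ≤ 0 then max (1 + t) 0 else if t ≤ 1 then 1
          else if t ≤ s then (max t 1) ^ (-γ) else if t ≤ S then s ^ (-γ) * ht t / J else 0)
          = s ^ (-γ) * h t / J
        rw [if_neg ht0, if_neg h1, if_neg h2, if_pos htm.2, hth t htm.1]
  have hη4 : ∀ t, S ≤ t → η t = 0 := by
    intro t htS
    rcases eq_or_lt_of_le htS with heq | hgt
    · rw [← heq, hη3 S ⟨hsS, le_refl S⟩, hhS]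
      simp
    · have h0 : ¬ t ≤ 0 := by push_neg; linarith
      have h1 : ¬ t ≤ 1 := by push_neg; linarith
      have h2 : ¬ t ≤ s := by push_neg; linarith
      have h3 : ¬ t ≤ S := not_le.2 hgt
      simp [hηdef, h0, h1, h2, h3]
  have hηneg : ∀ u : ℝ, u ≤ -1 → η u = 0 := by
    intro u hu
    show (if u ≤ 0 then max (1 + u) 0 else if u ≤ 1 then 1
      else if u ≤ s then (max u 1) ^ (-γ) else if u ≤ S then s ^ (-γ) * ht u / J else 0) = 0
    rw [if_pos (by linarith : u ≤ 0)]
    exact max_eq_right (by linarith)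
  have hη0 : ∀ u ∈ Icc (-1:ℝ) 0, η u = 1 + u := by
    intro u hu
    show (if u ≤ 0 then max (1 + u) 0 else if u ≤ 1 then 1
      else if u ≤ s then (max u 1) ^ (-γ) else if u ≤ S then s ^ (-γ) * ht u / J else 0) = 1 + u
    rw [if_pos hu.2]
    exact max_eq_left (by linarith [hu.1])
  -- continuity
  have hcmax : Continuous fun t : ℝ => (max t 1) ^ (-γ) :=
    Continuous.rpow_const (continuous_id.max continuous_const)
      (fun x => Or.inl (ne_of_gt (lt_of_lt_of_le one_pos (le_max_right x 1))))
  have hc3 : Continuous fun t : ℝ => if t ≤ S then s ^ (-γ) * ht t / J else 0 := by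
    apply Continuous.if_le ((continuous_const.mul hhtc).div_const J) continuous_const
      continuous_id continuous_const
    intro x hx
    have hx' : x = S := hx
    rw [hx']; show s ^ (-γ) * ht S / J = 0; rw [hth S hsS, hhS, mul_zero, zero_div]
  have hc2 : Continuous fun t : ℝ => if t ≤ s then (max t 1) ^ (-γ)
      else if t ≤ S then s ^ (-γ) * ht t / J else 0 := by
    apply Continuous.if_le hcmax hc3 continuous_id continuous_const
    intro x hx
    have hx' : x = s := hx
    rw [hx', if_pos hsS, max_eq_left hs, hth s le_rfl, hJs,
      mul_div_assoc, div_self hJpos.ne', mul_one]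
  have hc1 : Continuous fun t : ℝ => if t ≤ 1 then (1:ℝ) else if t ≤ s then (max t 1) ^ (-γ)
      else if t ≤ S then s ^ (-γ) * ht t / J else 0 := by
    apply Continuous.if_le continuous_const hc2 continuous_id continuous_const
    intro x hx
    have hx' : x = 1 := hx
    rw [hx', if_pos hs, max_self, one_rpow]
  have hηc : Continuous η := by
    show Continuous fun t : ℝ => if t ≤ 0 then max (1 + t) 0 else if t ≤ 1 then 1
      else if t ≤ s then (max t 1) ^ (-γ) else if t ≤ S then s ^ (-γ) * ht t / J else 0
    apply Continuous.if_le ((continuous_const.add continuous_id).max continuous_const) hc1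
      continuous_id continuous_const
    intro x hx
    have hx' : x = 0 := hx
    rw [hx', if_pos (zero_le_one)]
    norm_num
  -- right derivative and Lipschitz bound
  obtain ⟨M, hM⟩ := (isCompact_Icc : IsCompact (Icc s S)).exists_bound_of_continuousOn
    (hfc.mono (fun x hx => lt_of_lt_of_le hs0 hx.1))
  have hM0 : 0 ≤ M := le_trans (norm_nonneg _) (hM s ⟨le_refl s, hsS⟩)
  set K : ℝ := 1 + γ + s ^ (-γ) * M / J with hKdef
  have hK0 : 0 ≤ K := by positivity
  set D : ℝ → ℝ := fun t => if t < -1 then 0 else if t < 0 then 1 else if t < 1 then 0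
    else if t < s then -γ * t ^ (-γ - 1) else if t < S then s ^ (-γ) * -(f t) / J else 0
    with hDdef
  have hDeval : ∀ t, D t = if t < -1 then 0 else if t < 0 then 1 else if t < 1 then 0
      else if t < s then -γ * t ^ (-γ - 1) else if t < S then s ^ (-γ) * -(f t) / J else 0 :=
    fun t => rfl
  have hD : ∀ t, HasDerivWithinAt η (D t) (Ici t) t := by
    intro t
    rcases lt_or_ge t (-1) with h1 | h1
    · rw [hDeval, if_pos h1]
      have hee : η =ᶠ[nhds t] (fun _ => (0:ℝ)) :=
        Filter.eventuallyEq_of_mem (isOpen_Iio.mem_nhds h1)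
          (fun u hu => hηneg u (le_of_lt hu))
      exact (((hasDerivAt_const t (0:ℝ)).congr_of_eventuallyEq hee)).hasDerivWithinAt
    rcases lt_or_ge t 0 with h2 | h2
    · rw [hDeval, if_neg (not_lt.2 h1), if_pos h2]
      have hbase : HasDerivWithinAt (fun u : ℝ => 1 + u) 1 (Ici t) t := by
        simpa using ((hasDerivAt_id t).const_add (1:ℝ)).hasDerivWithinAt
      refine hbase.congr_of_eventuallyEq ?_ (hη0 t ⟨h1, h2.le⟩)
      filter_upwards [Filter.inter_mem self_mem_nhdsWithin
        (nhdsWithin_le_nhds (Iio_mem_nhds h2))] with u hu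
      obtain ⟨hu1, hu2⟩ := hu
      exact hη0 u ⟨le_trans h1 (mem_Ici.1 hu1), (mem_Iio.1 hu2).le⟩
    rcases lt_or_ge t 1 with h3 | h3
    · rw [hDeval, if_neg (not_lt.2 h1), if_neg (not_lt.2 h2), if_pos h3]
      refine (hasDerivWithinAt_const t _ (1:ℝ)).congr_of_eventuallyEq ?_ (hη1 t ⟨h2, h3.le⟩)
      filter_upwards [Filter.inter_mem self_mem_nhdsWithin
        (nhdsWithin_le_nhds (Iio_mem_nhds h3))] with u hu
      obtain ⟨hu1, hu2⟩ := hu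
      exact hη1 u ⟨le_trans h2 (mem_Ici.1 hu1), (mem_Iio.1 hu2).le⟩
    rcases lt_or_ge t s with h4 | h4
    · rw [hDeval, if_neg (not_lt.2 h1), if_neg (not_lt.2 h2), if_neg (not_lt.2 h3), if_pos h4]
      have ht0 : (0:ℝ) < t := by linarith
      have hφ : ∀ u : ℝ, 1 ≤ u → u < s → η u = u ^ (-γ) := by
        intro u hu1 hus
        rcases eq_or_lt_of_le hu1 with heq | hgt
        · rw [← heq, hη1 1 ⟨zero_le_one, le_rfl⟩, one_rpow]
        · exact hη2 u ⟨hgt, hus.le⟩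
      refine (Real.hasDerivAt_rpow_const (p := -γ)
        (Or.inl (ne_of_gt ht0))).hasDerivWithinAt.congr_of_eventuallyEq ?_ (hφ t h3 h4)
      filter_upwards [Filter.inter_mem self_mem_nhdsWithin
        (nhdsWithin_le_nhds (Iio_mem_nhds h4))] with u hu
      obtain ⟨hu1, hu2⟩ := hu
      exact hφ u (le_trans h3 (mem_Ici.1 hu1)) (mem_Iio.1 hu2)
    rcases lt_or_ge t S with h5 | h5
    · rw [hDeval, if_neg (not_lt.2 h1), if_neg (not_lt.2 h2), if_neg (not_lt.2 h3),
        if_neg (not_lt.2 h4), if_pos h5]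
      have ht0 : (0:ℝ) < t := by linarith
      have hψ : HasDerivWithinAt (fun u : ℝ => s ^ (-γ) * h u / J)
          (s ^ (-γ) * -(f t) / J) (Ici t) t :=
        (((hhd t ht0).const_mul (s ^ (-γ))).div_const J).hasDerivWithinAt
      refine hψ.congr_of_eventuallyEq ?_ (hη3 t ⟨h4, h5.le⟩)
      filter_upwards [Filter.inter_mem self_mem_nhdsWithin
        (nhdsWithin_le_nhds (Iio_mem_nhds h5))] with u hu
      obtain ⟨hu1, hu2⟩ := hu
      exact hη3 u ⟨le_trans h4 (mem_Ici.1 hu1), (mem_Iio.1 hu2).le⟩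
    · rw [hDeval, if_neg (not_lt.2 h1), if_neg (not_lt.2 h2), if_neg (not_lt.2 h3),
        if_neg (not_lt.2 h4), if_neg (not_lt.2 h5)]
      refine (hasDerivWithinAt_const t _ (0:ℝ)).congr_of_eventuallyEq ?_ (hη4 t h5)
      filter_upwards [self_mem_nhdsWithin] with u hu
      exact hη4 u (le_trans h5 (mem_Ici.1 hu))
  have hthird : 0 ≤ s ^ (-γ) * M / J :=
    div_nonneg (mul_nonneg (Real.rpow_nonneg hs0.le _) hM0) hJpos.le
  have hDb : ∀ t, ‖D t‖ ≤ K := by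
    intro t
    rw [Real.norm_eq_abs, hDeval]
    rcases lt_or_ge t (-1) with h1 | h1
    · rw [if_pos h1, abs_zero, hKdef]; linarith
    rw [if_neg (not_lt.2 h1)]
    rcases lt_or_ge t 0 with h2 | h2
    · rw [if_pos h2, abs_one, hKdef]; linarith
    rw [if_neg (not_lt.2 h2)]
    rcases lt_or_ge t 1 with h3 | h3
    · rw [if_pos h3, abs_zero, hKdef]; linarith
    rw [if_neg (not_lt.2 h3)]
    rcases lt_or_ge t s with h4 | h4
    · rw [if_pos h4]
      have ht0 : (0:ℝ) < t := by linarith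
      have hpow : 0 < t ^ (-γ - 1) := Real.rpow_pos_of_pos ht0 _
      have hple : t ^ (-γ - 1) ≤ 1 :=
        Real.rpow_le_one_of_one_le_of_nonpos h3 (by linarith)
      rw [abs_mul, abs_neg, abs_of_pos hγpos, abs_of_pos hpow, hKdef]
      nlinarith [mul_le_mul_of_nonneg_left hple hγpos.le]
    rw [if_neg (not_lt.2 h4)]
    rcases lt_or_ge t S with h5 | h5
    · rw [if_pos h5]
      have hft : ‖f t‖ ≤ M := hM t ⟨h4, h5.le⟩
      rw [Real.norm_eq_abs] at hft
      have hsp : 0 < s ^ (-γ) := Real.rpow_pos_of_pos hs0 _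
      rw [abs_div, abs_mul, abs_neg, abs_of_pos hsp, abs_of_pos hJpos]
      calc s ^ (-γ) * |f t| / J ≤ s ^ (-γ) * M / J :=
            (div_le_div_iff_of_pos_right hJpos).2 (mul_le_mul_of_nonneg_left hft hsp.le)
        _ ≤ K := by rw [hKdef]; linarith

    · rw [if_neg (not_lt.2 h5), abs_zero, hKdef]; linarith
  have hKey : ∀ a b : ℝ, a ≤ b → ‖η b - η a‖ ≤ K * (b - a) := by
    intro a b hab
    exact norm_image_sub_le_of_norm_deriv_right_le_segment
      (hηc.continuousOn) (fun x _ => hD x) (fun x _ => hDb x) b (right_mem_Icc.2 hab)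
  have hLip : LipschitzWith ⟨K, hK0⟩ η := by
    apply LipschitzWith.of_dist_le_mul
    intro x y
    rcases le_total x y with hxy | hxy
    · rw [Real.dist_eq, Real.dist_eq, abs_sub_comm (η x), abs_sub_comm x]
      calc |η y - η x| ≤ K * (y - x) := by
              simpa [Real.norm_eq_abs] using hKey x y hxy
        _ ≤ K * |y - x| := by
              exact mul_le_mul_of_nonneg_left (le_abs_self _) hK0
    · rw [Real.dist_eq, Real.dist_eq]
      calc |η x - η y| ≤ K * (x - y) := by
              simpa [Real.norm_eq_abs] using hKey y x hxy
        _ ≤ K * |x - y| := mul_le_mul_of_nonneg_left (le_abs_self _) hK0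
  have hCS : HasCompactSupport η := by
    apply HasCompactSupport.intro (isCompact_Icc (a := (-1:ℝ)) (b := S))
    intro x hx
    simp only [mem_Icc, not_and_or, not_le] at hx
    rcases hx with hx | hx
    · have hx0 : x ≤ 0 := by linarith
      show (if x ≤ 0 then max (1 + x) 0 else if x ≤ 1 then 1
        else if x ≤ s then (max x 1) ^ (-γ) else if x ≤ S then s ^ (-γ) * ht x / J else 0) = 0
      rw [if_pos hx0]
      exact max_eq_right (by linarith)
    · exact hη4 x hx.le
  have main := hstab η hLip.locallyLipschitz hCS
  -- derivative values a.e.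
  have hd1 : ∀ t ∈ Ioo (0:ℝ) 1, deriv η t = 0 := by
    intro t htm
    have hee : η =ᶠ[nhds t] (fun _ => (1:ℝ)) :=
      Filter.eventuallyEq_of_mem (isOpen_Ioo.mem_nhds htm)
        (fun u hu => hη1 u ⟨hu.1.le, hu.2.le⟩)
    rw [hee.deriv_eq, deriv_const]
  have hd2 : ∀ t ∈ Ioo (1:ℝ) s, deriv η t = -γ * t ^ (-γ - 1) := by
    intro t htm
    have hrd : HasDerivAt (fun u : ℝ => u ^ (-γ)) (-γ * t ^ (-γ - 1)) t :=
      Real.hasDerivAt_rpow_const (Or.inl (ne_of_gt (lt_trans one_pos htm.1)))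
    have hee : η =ᶠ[nhds t] (fun u => u ^ (-γ)) :=
      Filter.eventuallyEq_of_mem (isOpen_Ioo.mem_nhds htm)
        (fun u hu => hη2 u ⟨hu.1, hu.2.le⟩)
    exact (hrd.congr_of_eventuallyEq hee).deriv
  have hd3 : ∀ t ∈ Ioo s S, deriv η t = s ^ (-γ) * -(f t) / J := by
    intro t htm
    have ht0 : (0:ℝ) < t := lt_trans hs0 htm.1
    have hrd : HasDerivAt (fun u : ℝ => s ^ (-γ) * h u / J) (s ^ (-γ) * -(f t) / J) t :=
      ((hhd t ht0).const_mul (s ^ (-γ))).div_const J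
    have hee : η =ᶠ[nhds t] (fun u => s ^ (-γ) * h u / J) :=
      Filter.eventuallyEq_of_mem (isOpen_Ioo.mem_nhds htm)
        (fun u hu => hη3 u ⟨hu.1.le, hu.2.le⟩)
    exact (hrd.congr_of_eventuallyEq hee).deriv
  have hd4 : ∀ t ∈ Ioi S, deriv η t = 0 := by
    intro t htm
    have hee : η =ᶠ[nhds t] (fun _ => (0:ℝ)) :=
      Filter.eventuallyEq_of_mem (isOpen_Ioi.mem_nhds htm)
        (fun u hu => hη4 u (le_of_lt hu))
    rw [hee.deriv_eq, deriv_const]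
  -- integral decompositions
  have hsq : ∀ x : ℝ, 0 < x → ∀ a : ℝ, (x ^ a) ^ (2:ℕ) = x ^ (2*a) := by
    intro x hx a
    rw [← Real.rpow_natCast (x ^ a) 2, ← Real.rpow_mul hx.le]
    norm_num [mul_comm]
  have hident : ∀ t : ℝ, 0 < t → t ^ (N-1) * g t * (f t)^2 = f t := by
    intro t ht0
    have hg := hgpos t ht0
    have hti : t ^ (N-1) * t ^ (-(N-1)) = 1 := by
      rw [← Real.rpow_add ht0, add_neg_cancel, Real.rpow_zero]
    have hgi : g t * (g t)⁻¹ = 1 := mul_inv_cancel₀ hg.ne'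
    simp only [hfdef]
    linear_combination (t ^ (-(N-1)) * (g t)⁻¹ * t ^ (N-1) * t ^ (-(N-1))) * hgi
      + t ^ (-(N-1)) * (g t)⁻¹ * hti
  have hrpc : ContinuousOn (fun t : ℝ => t ^ (N-3)) (Ioi 0) :=
    ContinuousOn.rpow_const continuousOn_id (fun t htm => Or.inl (ne_of_gt htm))
  have hrpc1 : ContinuousOn (fun t : ℝ => t ^ (N-1)) (Ioi 0) :=
    ContinuousOn.rpow_const continuousOn_id (fun t htm => Or.inl (ne_of_gt htm))
  have hrpc2 : ContinuousOn (fun t : ℝ => t ^ (N-3-2*γ)) (Ioi 0) :=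
    ContinuousOn.rpow_const continuousOn_id (fun t htm => Or.inl (ne_of_gt htm))
  have hcontIoc : ∀ (φ : ℝ → ℝ), ContinuousOn φ (Ioi 0) → ∀ a b : ℝ, 0 < a →
      IntegrableOn φ (Ioc a b) := by
    intro φ hφ a b ha
    have hsub : Icc a b ⊆ Ioi 0 := fun x hx => lt_of_lt_of_le ha hx.1
    exact ((hφ.mono hsub).integrableOn_compact isCompact_Icc).mono_set Ioc_subset_Icc_self
  have hFc : ContinuousOn (fun t : ℝ => t ^ (N-3) * g t * η t ^ 2) (Ioi 0) :=
    (hrpc.mul hgc).mul ((hηc.continuousOn).pow 2)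
  -- LHS pieces
  have hF1int : IntegrableOn (fun t => t ^ (N-3) * g t * η t ^ 2) (Ioc 0 1) := by
    refine (integrableOn_Ioc_iff_integrableOn_Ioo).2 ?_
    refine hInt.congr_fun (fun t htm => ?_) measurableSet_Ioo
    rw [hη1 t ⟨htm.1.le, htm.2.le⟩]
    ring
  have hF2int : IntegrableOn (fun t => t ^ (N-3) * g t * η t ^ 2) (Ioc 1 s) :=
    hcontIoc _ hFc 1 s one_pos
  have hF3int : IntegrableOn (fun t => t ^ (N-3) * g t * η t ^ 2) (Ioc s S) :=
    hcontIoc _ hFc s S hs0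
  have hF4int : IntegrableOn (fun t => t ^ (N-3) * g t * η t ^ 2) (Ioi S) := by
    refine (integrableOn_zero).congr_fun (fun t htm => ?_) measurableSet_Ioi
    rw [hη4 t (le_of_lt htm)]
    ring
  have hF1 : ∫ t in Ioc (0:ℝ) 1, t ^ (N-3) * g t * η t ^ 2 = A := by
    rw [MeasureTheory.integral_Ioc_eq_integral_Ioo, hA]
    refine setIntegral_congr_fun measurableSet_Ioo (fun t htm => ?_)
    rw [hη1 t ⟨htm.1.le, htm.2.le⟩]
    ring
  set B : ℝ := ∫ t in Ioc (1:ℝ) s, t ^ (N-3-2*γ) * g t with hB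
  have hF2 : ∫ t in Ioc (1:ℝ) s, t ^ (N-3) * g t * η t ^ 2 = B := by
    rw [hB, MeasureTheory.integral_Ioc_eq_integral_Ioo,
      MeasureTheory.integral_Ioc_eq_integral_Ioo]
    refine setIntegral_congr_fun measurableSet_Ioo (fun t htm => ?_)
    have ht0 : (0:ℝ) < t := lt_trans one_pos htm.1
    rw [hη2 t ⟨htm.1, htm.2.le⟩, hsq t ht0 (-γ),
      show N - 3 - 2*γ = (N-3) + 2 * -γ by ring, Real.rpow_add ht0]
    ring
  set T : ℝ := ∫ t in Ioc s S, t ^ (N-3) * g t * η t ^ 2 with hT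
  have hTnonneg : 0 ≤ T := by
    rw [hT]
    refine setIntegral_nonneg measurableSet_Ioc (fun t htm => ?_)
    have ht0 : (0:ℝ) < t := lt_trans hs0 htm.1
    have := (hgpos t ht0).le
    positivity
  have hF4 : ∫ t in Ioi S, t ^ (N-3) * g t * η t ^ 2 = 0 := by
    rw [setIntegral_congr_fun measurableSet_Ioi
      (fun t htm => by rw [hη4 t (le_of_lt htm)]; ring : EqOn _ (fun _ => (0:ℝ)) (Ioi S))]
    exact integral_zero _ _
  have hu1 : Ioc (0:ℝ) 1 ∪ Ioc 1 s = Ioc 0 s := Ioc_union_Ioc_eq_Ioc (by linarith) hs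
  have hu2 : Ioc (0:ℝ) s ∪ Ioc s S = Ioc 0 S := Ioc_union_Ioc_eq_Ioc (by linarith) hsS
  have hu3 : Ioc (0:ℝ) S ∪ Ioi S = Ioi 0 := Ioc_union_Ioi_eq_Ioi (by linarith)
  have hLHS : ∫ t in Ioi (0:ℝ), t ^ (N-3) * g t * η t ^ 2 = A + B + T := by
    have h12 := hu1 ▸ (hF1int.union hF2int)
    have h123 := hu2 ▸ (h12.union hF3int)
    rw [← hu3, setIntegral_union Ioc_disjoint_Ioi_same measurableSet_Ioi h123 hF4int, hF4,
      add_zero, ← hu2, setIntegral_union (Ioc_disjoint_Ioc_of_le le_rfl) measurableSet_Ioc h12 hF3int,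
      ← hu1, setIntegral_union (Ioc_disjoint_Ioc_of_le le_rfl) measurableSet_Ioc hF1int hF2int,
      hF1, hF2, ← hT]
  -- RHS pieces
  have hG1int : IntegrableOn (fun t => t ^ (N-1) * g t * deriv η t ^ 2) (Ioc 0 1) := by
    refine (integrableOn_Ioc_iff_integrableOn_Ioo).2 ?_
    refine (integrableOn_zero).congr_fun (fun t htm => ?_) measurableSet_Ioo
    rw [hd1 t htm]
    ring
  have hG1 : ∫ t in Ioc (0:ℝ) 1, t ^ (N-1) * g t * deriv η t ^ 2 = 0 := by
    rw [MeasureTheory.integral_Ioc_eq_integral_Ioo]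
    rw [setIntegral_congr_fun measurableSet_Ioo
      (fun t htm => by
        show t ^ (N-1) * g t * deriv η t ^ 2 = (0:ℝ)
        rw [hd1 t htm]; ring :
        EqOn (fun t => t ^ (N-1) * g t * deriv η t ^ 2) (fun _ => (0:ℝ)) (Ioo (0:ℝ) 1))]
    exact integral_zero _ _
  have hG2eq : EqOn (fun t => t ^ (N-1) * g t * deriv η t ^ 2)
      (fun t => γ^2 * (t ^ (N-3-2*γ) * g t)) (Ioo 1 s) := by
    intro t htm
    have ht0 : (0:ℝ) < t := lt_trans one_pos htm.1
    show t ^ (N-1) * g t * deriv η t ^ 2 = γ^2 * (t ^ (N-3-2*γ) * g t)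
    rw [hd2 t htm, mul_pow, neg_pow, hsq t ht0 (-γ-1),
      show N - 3 - 2*γ = (N-1) + 2 * (-γ-1) by ring, Real.rpow_add ht0]
    ring
  have hG2int : IntegrableOn (fun t => t ^ (N-1) * g t * deriv η t ^ 2) (Ioc 1 s) := by
    refine (integrableOn_Ioc_iff_integrableOn_Ioo).2 ?_
    have hint : IntegrableOn (fun t => γ^2 * (t ^ (N-3-2*γ) * g t)) (Ioo 1 s) :=
      ((hcontIoc _ (ContinuousOn.mul continuousOn_const (hrpc2.mul hgc)) 1 s
        one_pos).mono_set Ioo_subset_Ioc_self)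
    exact hint.congr_fun (fun t htm => (hG2eq htm).symm) measurableSet_Ioo
  have hG2 : ∫ t in Ioc (1:ℝ) s, t ^ (N-1) * g t * deriv η t ^ 2 = γ^2 * B := by
    rw [hB, MeasureTheory.integral_Ioc_eq_integral_Ioo,
      MeasureTheory.integral_Ioc_eq_integral_Ioo, ← MeasureTheory.integral_const_mul]
    exact setIntegral_congr_fun measurableSet_Ioo hG2eq
  have hG3eq : EqOn (fun t => t ^ (N-1) * g t * deriv η t ^ 2)
      (fun t => (s ^ (-γ))^2 / J^2 * f t) (Ioo s S) := by
    intro t htm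
    have ht0 : (0:ℝ) < t := lt_trans hs0 htm.1
    show t ^ (N-1) * g t * deriv η t ^ 2 = (s ^ (-γ))^2 / J^2 * f t
    rw [hd3 t htm]
    have hk := hident t ht0
    have hJne : J ≠ 0 := hJpos.ne'
    field_simp
    linear_combination hk
  have hG3int : IntegrableOn (fun t => t ^ (N-1) * g t * deriv η t ^ 2) (Ioc s S) := by
    refine (integrableOn_Ioc_iff_integrableOn_Ioo).2 ?_
    have hint : IntegrableOn (fun t => (s ^ (-γ))^2 / J^2 * f t) (Ioo s S) :=
      ((hcontIoc _ (ContinuousOn.mul continuousOn_const hfc) s S hs0).mono_set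
        Ioo_subset_Ioc_self)
    exact hint.congr_fun (fun t htm => (hG3eq htm).symm) measurableSet_Ioo
  have hG3 : ∫ t in Ioc s S, t ^ (N-1) * g t * deriv η t ^ 2 = (s ^ (-γ))^2 / J := by
    rw [MeasureTheory.integral_Ioc_eq_integral_Ioo,
      setIntegral_congr_fun measurableSet_Ioo hG3eq,
      ← MeasureTheory.integral_Ioc_eq_integral_Ioo, MeasureTheory.integral_const_mul, ← hJdef]
    field_simp
  have hG4int : IntegrableOn (fun t => t ^ (N-1) * g t * deriv η t ^ 2) (Ioi S) := by
    refine (integrableOn_zero).congr_fun (fun t htm => ?_) measurableSet_Ioi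
    rw [hd4 t htm]
    ring
  have hG4 : ∫ t in Ioi S, t ^ (N-1) * g t * deriv η t ^ 2 = 0 := by
    rw [setIntegral_congr_fun measurableSet_Ioi
      (fun t htm => by rw [hd4 t htm]; ring : EqOn _ (fun _ => (0:ℝ)) (Ioi S))]
    exact integral_zero _ _
  have hRHS : ∫ t in Ioi (0:ℝ), t ^ (N-1) * g t * deriv η t ^ 2
      = γ^2 * B + (s ^ (-γ))^2 / J := by
    have h12 := hu1 ▸ (hG1int.union hG2int)
    have h123 := hu2 ▸ (h12.union hG3int)
    rw [← hu3, setIntegral_union Ioc_disjoint_Ioi_same measurableSet_Ioi h123 hG4int, hG4,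
      add_zero, ← hu2, setIntegral_union (Ioc_disjoint_Ioc_of_le le_rfl) measurableSet_Ioc h12 hG3int,
      ← hu1, setIntegral_union (Ioc_disjoint_Ioc_of_le le_rfl) measurableSet_Ioc hG1int hG2int,
      hG1, hG2, hG3, zero_add]
  rw [hLHS, hRHS] at main
  -- conclude
  have hcancel : (N-1) * B = (p-1) * (γ^2 * B) := by rw [← hγsq]; ring
  have h1 : (N-1) * A ≤ (p-1) * ((s ^ (-γ))^2 / J) := by
    nlinarith [mul_nonneg (le_of_lt hN1') hTnonneg, hcancel, main]
  have h2 : (N-1) * A * J ≤ (p-1) * (s ^ (-γ))^2 := by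
    have h3 := mul_le_mul_of_nonneg_right h1 hJpos.le
    calc (N-1) * A * J ≤ (p-1) * ((s ^ (-γ))^2 / J) * J := h3
      _ = (p-1) * (s ^ (-γ))^2 := by field_simp
  have hsγ : s ^ (-2*γ) = (s ^ (-γ))^2 := by
    rw [hsq s hs0 (-γ)]
    ring_nf
  rw [hsγ, div_mul_eq_mul_div, le_div_iff₀ (mul_pos hN1' hIntpos)]
  nlinarith [h2]

/-- Integral estimate from radial stability: if `ω` is the transformed
profile (with never-vanishing continuous derivative) satisfying the radial stability
inequality in the fractional dimension `N = p(n+α)/(p+α)`, then for `1 ≤ s ≤ S`,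
`∫_s^S t^{-(N-1)} |ω'(t)|^{-p} dt ≤ C s^{-2√((N-1)/(p-1))}` where
`C = (p-1)/((N-1) ∫₀¹ t^{N-3}|ω'(t)|^p dt)`. -/
theorem stability_integral_estimate
    (p α n : ℝ) (hp : 2 ≤ p) (hα : 0 ≤ α) (hn : 1 - α + α / p < n)
    (N : ℝ) (hN : N = p * (n + α) / (p + α))
    (ω ω' : ℝ → ℝ)
    (hω : ∀ t ∈ Set.Ioi (0 : ℝ), HasDerivAt ω (ω' t) t)
    (hω'cont : ContinuousOn ω' (Set.Ioi 0))
    (hω'ne : ∀ t ∈ Set.Ioi (0 : ℝ), ω' t ≠ 0)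
    (hInt : IntegrableOn (fun t => t ^ (N - 3) * |ω' t| ^ p) (Set.Ioo 0 1))
    (hIntpos : 0 < ∫ t in Set.Ioo (0 : ℝ) 1, t ^ (N - 3) * |ω' t| ^ p)
    (hstab : ∀ η : ℝ → ℝ, LocallyLipschitz η → HasCompactSupport η →
      (N - 1) * ∫ t in Set.Ioi (0 : ℝ), t ^ (N - 3) * |ω' t| ^ p * η t ^ 2 ≤
        (p - 1) * ∫ t in Set.Ioi (0 : ℝ), t ^ (N - 1) * |ω' t| ^ p * deriv η t ^ 2) :
    ∀ s S : ℝ, 1 ≤ s → s ≤ S →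
      (∫ t in Set.Ioc s S, t ^ (-(N - 1)) * |ω' t| ^ (-p)) ≤
        (p - 1) / ((N - 1) * ∫ t in Set.Ioo (0 : ℝ) 1, t ^ (N - 3) * |ω' t| ^ p) *
          s ^ (-2 * Real.sqrt ((N - 1) / (p - 1))) := by
  have hp0 : (0:ℝ) < p := by linarith
  have hpα : (0:ℝ) < p + α := by linarith
  have hN1 : 1 < N := by
    rw [hN, lt_div_iff₀ hpα]
    have hap : α / p * p = α := div_mul_cancel₀ _ (ne_of_gt hp0)
    nlinarith [mul_lt_mul_of_pos_left hn hp0]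
  have key := stability_aux p N hp hN1 (fun t => |ω' t| ^ p)
    ((hω'cont.abs).rpow_const (fun t _ => Or.inr (by linarith)))
    (fun t htm => Real.rpow_pos_of_pos (abs_pos.2 (hω'ne t htm)) p)
    hInt hIntpos hstab
  intro s S hs hsS
  have := key s S hs hsS
  have hconv : (∫ t in Set.Ioc s S, t ^ (-(N - 1)) * |ω' t| ^ (-p))
      = ∫ t in Set.Ioc s S, t ^ (-(N - 1)) * (|ω' t| ^ p)⁻¹ := by
    apply MeasureTheory.setIntegral_congr_fun measurableSet_Ioc
    intro t _
    show t ^ (-(N - 1)) * |ω' t| ^ (-p) = t ^ (-(N - 1)) * (|ω' t| ^ p)⁻¹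
    rw [Real.rpow_neg (abs_nonneg _)]
  rw [hconv]
  exact this
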